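/- For all integers b ≥ 2, the sum over k from 2 to b of C(b,k)·(k-2)!·(b-k)! equals (b-1)!·(b-1). -/

import Mathlib

theorem stmt_0 (b : ℕ) (hb : 2 ≤ b) :
    ∑ k ∈ Finset.Icc 2 b, Nat.choose b k * Nat.factorial (k - 2) * Nat.factorial (b - k)
      = Nat.factorial (b - 1) * (b - 1) := by
  induction b, hb using Nat.le_induction with
  | base => decide
  | succ b hb ih =>
    rw [Finset.sum_Icc_succ_top (by omega : 2 ≤ b + 1)]
    have hstep : ∀ k ∈ Finset.Icc 2 b,
        Nat.choose (b+1) k * Nat.factorial (k - 2) * Nat.factorial (b + 1 - k)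
          = (b+1) * (Nat.choose b k * Nat.factorial (k - 2) * Nat.factorial (b - k)) := by
      intro k hk
      simp only [Finset.mem_Icc] at hk
      have h1 : b + 1 - k = (b - k) + 1 := by omega
      have h2 : Nat.choose b k * (b + 1) = Nat.choose (b+1) k * (b - k + 1) := by
        have h := Nat.choose_mul_succ_eq b k
        rwa [h1] at h
      rw [h1, Nat.factorial_succ]
      calc Nat.choose (b+1) k * Nat.factorial (k - 2) * ((b - k + 1) * Nat.factorial (b - k))
          = (Nat.choose (b+1) k * (b - k + 1)) * (Nat.factorial (k - 2) * Nat.factorial (b - k)) := by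
            ring
        _ = (Nat.choose b k * (b + 1)) * (Nat.factorial (k - 2) * Nat.factorial (b - k)) := by
            rw [h2]
        _ = (b+1) * (Nat.choose b k * Nat.factorial (k - 2) * Nat.factorial (b - k)) := by ring
    rw [Finset.sum_congr rfl hstep, ← Finset.mul_sum, ih]
    obtain ⟨m, rfl⟩ : ∃ m, b = m + 2 := ⟨b - 2, by omega⟩
    simp only [Nat.choose_self, Nat.add_sub_cancel, one_mul,
      show m + 2 + 1 - 2 = m + 1 from by omega, show m + 2 - 1 = m + 1 from by omega,
      show m + 2 + 1 - 1 = m + 2 from by omega, Nat.sub_self, Nat.factorial_zero, mul_one]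
    have e1 : Nat.factorial (m+1) = (m+1) * Nat.factorial m := Nat.factorial_succ m
    have e2 : Nat.factorial (m+2) = (m+2) * Nat.factorial (m+1) := Nat.factorial_succ (m+1)
    rw [e2, e1]
    ring
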